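/- Let V be a type, A : V → V → Prop, and layer : V → ℕ with layer(v) = layer(u) + 1 whenever A u v. Fix mid ∈ ℕ and s, t ∈ V with layer(s) < mid < layer(t), and suppose at least one s–t path exists. Let w, w' : V → ℕ satisfy: w(v) = 0 for every v with layer(v) = mid, and w'(v) = w(v) for every v with layer(v) ≠ mid. Assume: (a) for every u with layer(u) = mid lying on some s–t path, there is a unique minimum-w-weight s–u path and a unique minimum-w-weight u–t path; and (b) for all u ≠ v with layer(u) = layer(v) = mid, each lying on some s–t path, μ_w(s,u) + μ_w(u,t) + w'(u) ≠ μ_w(s,v) + μ_w(v,t) + w'(v). Then there is a unique minimum-w'-weight s–t path. -/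

import Mathlib

/-- `IsPath A s t l`: the nonempty list `l` is a path from `s` to `t` in the
directed graph with edge relation `A`. -/
def IsPath {V : Type*} (A : V → V → Prop) (s t : V) (l : List V) : Prop :=
  l ≠ [] ∧ l.head? = some s ∧ l.getLast? = some t ∧ l.Chain' A

/-- The weight of a path under a vertex-weight function: the sum of the weights
of its vertices. -/
def pathWeight {V : Type*} (w : V → ℕ) (l : List V) : ℕ :=
  (l.map w).sum

/-- `mu A w x y`: the minimum weight of an `x`–`y` path under `w`. -/
noncomputable def mu {V : Type*} (A : V → V → Prop) (w : V → ℕ) (x y : V) : ℕ :=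
  sInf {n | ∃ l, IsPath A x y l ∧ pathWeight w l = n}

section Helpers
variable {V : Type*} {A : V → V → Prop} {layer : V → ℕ} {s t u : V} {l l1 l2 : List V}

lemma isPath_getElem_zero (h : IsPath A s t l) (h0 : 0 < l.length) : l[0] = s := by
  obtain ⟨hne, hhead, _, _⟩ := h
  rw [List.head?_eq_head hne, List.head_eq_getElem] at hhead
  exact Option.some.inj hhead

lemma isPath_layer (hlayer : ∀ u v, A u v → layer v = layer u + 1)
    (h : IsPath A s t l) : ∀ i (hi : i < l.length), layer l[i] = layer s + i := by
  intro i hi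
  induction i with
  | zero => rw [isPath_getElem_zero h (by omega)]; omega
  | succ n ih =>
      have hn : n < l.length := Nat.lt_of_succ_lt hi
      have hA : A l[n] l[n+1] := by
        have := List.isChain_iff_getElem.mp h.2.2.2 n (by omega)
        simpa using this
      rw [hlayer _ _ hA, ih hn]; omega

lemma isPath_getLast (h : IsPath A s t l)
    (h' : l.length - 1 < l.length) : l[l.length - 1] = t := by
  obtain ⟨hne, hhead, hlast, hchain⟩ := h
  rw [List.getLast?_eq_getLast hne, List.getLast_eq_getElem] at hlast
  exact Option.some.inj hlast

lemma isPath_take (h : IsPath A s t l) {i : ℕ} (hi : i < l.length) :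
    IsPath A s l[i] (l.take (i+1)) := by
  have hlen : (l.take (i+1)).length = i + 1 := by simp [List.length_take]; omega
  have hne' : l.take (i+1) ≠ [] := List.ne_nil_of_length_pos (by omega)
  obtain ⟨hne, hhead, hlast, hchain⟩ := h
  refine ⟨hne', ?_, ?_, hchain.take _⟩
  · rw [List.head?_take]; simp [hhead]
  · rw [List.getLast?_eq_getLast hne', List.getLast_eq_getElem]
    congr 1
    simp [hlen, List.getElem_take]

lemma isPath_drop (h : IsPath A s t l) {i : ℕ} (hi : i < l.length) :
    IsPath A l[i] t (l.drop i) := by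
  have hd : l.drop i = l[i] :: l.drop (i+1) := List.drop_eq_getElem_cons hi
  have hne' : l.drop i ≠ [] := by rw [hd]; exact List.cons_ne_nil _ _
  obtain ⟨hne, hhead, hlast, hchain⟩ := h
  refine ⟨hne', ?_, ?_, hchain.drop _⟩
  · rw [hd]; rfl
  · rw [← List.take_append_drop i l, List.getLast?_append] at hlast
    cases hgl : (l.drop i).getLast? with
    | none => exact absurd (List.getLast?_eq_none_iff.mp hgl) hne'
    | some x => rw [hgl] at hlast; simpa using hlast

lemma isPath_append (h1 : IsPath A s u l1) (h2 : IsPath A u t l2) :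
    IsPath A s t (l1 ++ l2.tail) := by
  obtain ⟨hne1, hhead1, hlast1, hchain1⟩ := h1
  obtain ⟨hne2, hhead2, hlast2, hchain2⟩ := h2
  obtain ⟨r, rfl⟩ : ∃ r, l2 = u :: r := by
    cases l2 with
    | nil => exact absurd rfl hne2
    | cons a r => exact ⟨r, by simpa using congrArg (fun o => o.getD a) hhead2⟩
  simp only [List.tail_cons]
  cases r with
  | nil =>
      have hut : u = t := by simpa using hlast2
      subst hut
      rw [List.append_nil]
      exact ⟨hne1, hhead1, hlast1, hchain1⟩
  | cons b r' =>
      refine ⟨by simp [hne1], ?_, ?_, ?_⟩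
      · rw [List.head?_append, hhead1]; rfl
      · rw [List.getLast?_append]
        simpa using hlast2
      · refine hchain1.append (hchain2.tail) ?_
        intro x hx y hy
        have hxu : x = u := by
          rw [Option.mem_def, hlast1] at hx
          exact (Option.some.inj hx).symm
        have hyb : y = b := by simpa using hy.symm
        subst hxu; subst hyb
        exact (List.isChain_cons_cons.mp hchain2).1


lemma pathWeight_append (w : V → ℕ) (l1 l2 : List V) :
    pathWeight w (l1 ++ l2) = pathWeight w l1 + pathWeight w l2 := by
  simp [pathWeight]

lemma pathWeight_head {w : V → ℕ} (h : IsPath A u t l2) :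
    pathWeight w l2 = w u + pathWeight w l2.tail := by
  obtain ⟨hne, hhead, -, -⟩ := h
  cases l2 with
  | nil => exact absurd rfl hne
  | cons a r =>
      have : a = u := by simpa using hhead
      simp [pathWeight, this]

lemma mu_le {w : V → ℕ} {x y : V} (h : IsPath A x y l) :
    mu A w x y ≤ pathWeight w l := Nat.sInf_le ⟨l, h, rfl⟩

lemma mu_achieved {w : V → ℕ} {x y : V} (h : ∃ l, IsPath A x y l) :
    ∃ l, IsPath A x y l ∧ pathWeight w l = mu A w x y := by
  obtain ⟨l, hl⟩ := h
  exact Nat.sInf_mem (⟨pathWeight w l, l, hl, rfl⟩ :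
    Set.Nonempty {n | ∃ l, IsPath A x y l ∧ pathWeight w l = n})

lemma isPath_length (hlayer : ∀ u v, A u v → layer v = layer u + 1)
    (h : IsPath A s t l) : layer t + 1 = layer s + l.length := by
  have hpos : 0 < l.length := List.length_pos_iff.mpr h.1
  have h1 := isPath_layer hlayer h (l.length - 1) (by omega)
  rw [isPath_getLast h (by omega)] at h1
  omega

lemma pathWeight_cross {w w' : V → ℕ} {mid : ℕ}
    (hlayer : ∀ u v, A u v → layer v = layer u + 1)
    (h : IsPath A s t l) {i : ℕ} (hi : i < l.length) (hmid : layer l[i] = mid)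
    (hw0 : ∀ v, layer v = mid → w v = 0)
    (hagree : ∀ v, layer v ≠ mid → w' v = w v) :
    pathWeight w' l = pathWeight w l + w' l[i] := by
  have hsplit : l = l.take i ++ (l[i] :: l.drop (i+1)) := by
    rw [← List.drop_eq_getElem_cons hi, List.take_append_drop]
  have hlay := isPath_layer hlayer h
  have hsi : layer s + i = mid := by rw [← hmid, hlay i hi]
  have htake : ∀ x ∈ l.take i, w' x = w x := by
    intro x hx
    obtain ⟨j, hj, rfl⟩ := List.mem_iff_getElem.mp hx
    rw [List.getElem_take]
    refine hagree _ ?_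
    have hjl : j < l.length := by
      have := List.length_take (i := i) (l := l); omega
    rw [hlay j hjl]
    have : j < i := by have := List.length_take (i := i) (l := l); omega
    omega
  have hdrop : ∀ x ∈ l.drop (i+1), w' x = w x := by
    intro x hx
    obtain ⟨j, hj, rfl⟩ := List.mem_iff_getElem.mp hx
    rw [List.getElem_drop]
    refine hagree _ ?_
    have hjl : i + 1 + j < l.length := by
      have := List.length_drop (i := i+1) (l := l); omega
    rw [hlay _ hjl]
    omega
  have e1 : (l.take i).map w' = (l.take i).map w := List.map_congr_left htake
  have e2 : (l.drop (i+1)).map w' = (l.drop (i+1)).map w := List.map_congr_left hdrop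
  have E1 := congrArg (pathWeight w') hsplit
  have E2 := congrArg (pathWeight w) hsplit
  rw [E1, E2]
  simp only [pathWeight, List.map_append, List.map_cons, List.sum_append, List.sum_cons,
    e1, e2, hw0 _ hmid]
  omega

end Helpers


/-- Inductive step of the block-system construction: in a layered DAG, if
`layer s < mid < layer t`, the old weights `w` vanish on the middle layer `mid`,
the new weights `w'` agree with `w` off the middle layer, within each half the
minimum-weight paths through any middle-layer vertex on an `s`–`t` path are
unique, and the disambiguation requirement holds for distinct middle-layer
vertices, then there is a unique minimum-`w'`-weight `s`–`t` path. -/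
theorem stmt_14 {V : Type*} (A : V → V → Prop) (layer : V → ℕ)
    (hlayer : ∀ u v, A u v → layer v = layer u + 1)
    (mid : ℕ) (s t : V) (hs : layer s < mid) (ht : mid < layer t)
    (hex : ∃ l, IsPath A s t l)
    (w w' : V → ℕ)
    (hw0 : ∀ v, layer v = mid → w v = 0)
    (hagree : ∀ v, layer v ≠ mid → w' v = w v)
    (ha : ∀ u, layer u = mid → (∃ l, IsPath A s t l ∧ u ∈ l) →
      (∃! l, IsPath A s u l ∧ ∀ l', IsPath A s u l' →
        pathWeight w l ≤ pathWeight w l') ∧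
      (∃! l, IsPath A u t l ∧ ∀ l', IsPath A u t l' →
        pathWeight w l ≤ pathWeight w l'))
    (hb : ∀ u v, u ≠ v → layer u = mid → layer v = mid →
      (∃ l, IsPath A s t l ∧ u ∈ l) → (∃ l, IsPath A s t l ∧ v ∈ l) →
      mu A w s u + mu A w u t + w' u ≠ mu A w s v + mu A w v t + w' v) :
    ∃! l, IsPath A s t l ∧ ∀ l', IsPath A s t l' →
      pathWeight w' l ≤ pathWeight w' l' := by
  classical
  -- every s–t path crosses the middle layer at index mid - layer s
  have hcross : ∀ l, IsPath A s t l → ∃ i : ℕ, ∃ hi : i < l.length,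
      layer l[i] = mid ∧ i = mid - layer s := by
    intro l hl
    have hlen := isPath_length hlayer hl
    have hlay := isPath_layer hlayer hl
    refine ⟨mid - layer s, by omega, ?_, rfl⟩
    rw [hlay _ (by omega)]; omega
  -- decomposition of the w'-weight of any s–t path at its crossing vertex
  have key : ∀ l, IsPath A s t l → ∃ i : ℕ, ∃ hi : i < l.length,
      (layer l[i] = mid ∧ ∃ l0, IsPath A s t l0 ∧ l[i] ∈ l0) ∧
      pathWeight w' l =
        pathWeight w (l.take (i+1)) + pathWeight w (l.drop i) + w' l[i] := by
    intro l hl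
    obtain ⟨i, hi, hmidl, -⟩ := hcross l hl
    refine ⟨i, hi, ⟨hmidl, l, hl, List.getElem_mem hi⟩, ?_⟩
    rw [pathWeight_cross hlayer hl hi hmidl hw0 hagree]
    congr 1
    have e3 : pathWeight w (l.drop i) = pathWeight w (l.drop (i+1)) := by
      have ed := congrArg (fun L => (List.map w L).sum) (List.drop_eq_getElem_cons hi)
      simp only [pathWeight] at ed ⊢
      rw [ed, List.map_cons, List.sum_cons, hw0 _ hmidl, zero_add]
    have e4 := congrArg (pathWeight w) (List.take_append_drop (i+1) l)
    rw [← e4, pathWeight_append, e3]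
  -- s–u and u–t paths exist for middle vertices on s–t paths
  have hsplitMid : ∀ u : V, (∃ l, IsPath A s t l ∧ u ∈ l) →
      (∃ p, IsPath A s u p) ∧ (∃ p, IsPath A u t p) := by
    rintro u ⟨l, hl, hul⟩
    obtain ⟨j, hj, rfl⟩ := List.mem_iff_getElem.mp hul
    exact ⟨⟨_, isPath_take hl hj⟩, ⟨_, isPath_drop hl hj⟩⟩
  -- the minimum crossing value m and its witness ustar
  have hTne : Set.Nonempty {n | ∃ u, (layer u = mid ∧ ∃ l0, IsPath A s t l0 ∧ u ∈ l0) ∧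
      mu A w s u + mu A w u t + w' u = n} := by
    obtain ⟨l, hl⟩ := hex
    obtain ⟨i, hi, hM, -⟩ := key l hl
    exact ⟨_, l[i], hM, rfl⟩
  obtain ⟨ustar, hMu, hfm⟩ := Nat.sInf_mem hTne
  set m := sInf {n | ∃ u, (layer u = mid ∧ ∃ l0, IsPath A s t l0 ∧ u ∈ l0) ∧
      mu A w s u + mu A w u t + w' u = n} with hm
  have hmle : ∀ u, (layer u = mid ∧ ∃ l0, IsPath A s t l0 ∧ u ∈ l0) →
      m ≤ mu A w s u + mu A w u t + w' u := fun u hu => Nat.sInf_le ⟨u, hu, rfl⟩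
  -- lower bound for every s–t path
  have lower : ∀ l, IsPath A s t l → m ≤ pathWeight w' l := by
    intro l hl
    obtain ⟨i, hi, hM, heq⟩ := key l hl
    have h1 : mu A w s l[i] ≤ pathWeight w (l.take (i+1)) := mu_le (isPath_take hl hi)
    have h2 : mu A w l[i] t ≤ pathWeight w (l.drop i) := mu_le (isPath_drop hl hi)
    have h3 := hmle l[i] hM
    omega
  -- the unique minimum half-paths through ustar
  obtain ⟨p1, ⟨hp1, hp1min⟩, hp1uniq⟩ := (ha ustar hMu.1 hMu.2).1
  obtain ⟨p2, ⟨hp2, hp2min⟩, hp2uniq⟩ := (ha ustar hMu.1 hMu.2).2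
  have hp1mu : pathWeight w p1 = mu A w s ustar := by
    obtain ⟨q, hq, hqw⟩ := mu_achieved (w := w) (hsplitMid ustar hMu.2).1
    exact le_antisymm (hqw ▸ hp1min q hq) (mu_le hp1)
  have hp2mu : pathWeight w p2 = mu A w ustar t := by
    obtain ⟨q, hq, hqw⟩ := mu_achieved (w := w) (hsplitMid ustar hMu.2).2
    exact le_antisymm (hqw ▸ hp2min q hq) (mu_le hp2)
  -- the candidate path
  have hLpath : IsPath A s t (p1 ++ p2.tail) := isPath_append hp1 hp2
  have hLw : pathWeight w (p1 ++ p2.tail) = mu A w s ustar + mu A w ustar t := by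
    have := pathWeight_head (w := w) hp2
    rw [hw0 _ hMu.1] at this
    rw [pathWeight_append, hp1mu, ← hp2mu]
    omega
  obtain ⟨i0, hi0, hmidL, hi0eq⟩ := hcross _ hLpath
  have hp1len := isPath_length hlayer hp1
  have hi0p1 : i0 < p1.length := by
    have := hMu.1; omega
  have hLi0 : (p1 ++ p2.tail)[i0] = ustar := by
    rw [List.getElem_append_left hi0p1]
    have hi0e : i0 = p1.length - 1 := by have := hMu.1; omega
    have := isPath_getLast hp1 (by omega)
    simp only [hi0e]
    convert this using 2
  have hLw' : pathWeight w' (p1 ++ p2.tail) = m := by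
    rw [pathWeight_cross hlayer hLpath hi0 hmidL hw0 hagree, hLi0, hLw, hfm]
  refine ⟨p1 ++ p2.tail, ⟨hLpath, fun l' hl' => ?_⟩, ?_⟩
  · rw [hLw']; exact lower l' hl'
  · rintro l' ⟨hl', hmin'⟩
    have heqm : pathWeight w' l' = m :=
      le_antisymm (hLw' ▸ hmin' _ hLpath) (lower l' hl')
    obtain ⟨i', hi', hM', hdec⟩ := key l' hl'
    have h1 : mu A w s l'[i'] ≤ pathWeight w (l'.take (i'+1)) := mu_le (isPath_take hl' hi')
    have h2 : mu A w l'[i'] t ≤ pathWeight w (l'.drop i') := mu_le (isPath_drop hl' hi')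
    have hfu'm : mu A w s l'[i'] + mu A w l'[i'] t + w' l'[i'] = m :=
      le_antisymm (by omega) (hmle _ hM')
    have huu : l'[i'] = ustar := by
      by_contra hne
      exact hb l'[i'] ustar hne hM'.1 hMu.1 hM'.2 hMu.2 (by rw [hfu'm, hfm])
    rw [huu] at h1 h2 hfu'm hdec
    have hW1 : pathWeight w (l'.take (i'+1)) = mu A w s ustar := by omega
    have hW2 : pathWeight w (l'.drop i') = mu A w ustar t := by omega
    have e5 : l'.take (i'+1) = p1 := by
      refine hp1uniq _ ⟨huu ▸ isPath_take hl' hi', fun q hq => ?_⟩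
      rw [hW1]; exact mu_le hq
    have e6 : l'.drop i' = p2 := by
      refine hp2uniq _ ⟨huu ▸ isPath_drop hl' hi', fun q hq => ?_⟩
      rw [hW2]; exact mu_le hq
    rw [← e5, ← e6, List.tail_drop]
    exact (List.take_append_drop (i'+1) l').symm
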